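/- Let G be a connected multigraph with an odd number of edges, and let G* be obtained from G by adding a new vertex u joined by an edge to every vertex of G of odd degree. If G admits an interval coloring, then G* admits no interval coloring. -/

import Mathlib

open scoped Classical

structure Multigraph (V E : Type) where
  ends : E → Sym2 V
  not_isDiag : ∀ e, ¬ (ends e).IsDiag

namespace Multigraph

variable {V E : Type}

noncomputable def degree [Fintype E] (G : Multigraph V E) (v : V) : ℕ :=
  (Finset.univ.filter (fun e => v ∈ G.ends e)).card

def Proper (G : Multigraph V E) (c : E → ℕ) : Prop :=
  ∀ e f, e ≠ f → ∀ v, v ∈ G.ends e → v ∈ G.ends f → c e ≠ c f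

noncomputable def colorSet [Fintype E] (G : Multigraph V E) (c : E → ℕ) (v : V) : Finset ℕ :=
  (Finset.univ.filter (fun e => v ∈ G.ends e)).image c

def IsIntervalColoring [Fintype E] (G : Multigraph V E) (c : E → ℕ) (t : ℕ) : Prop :=
  G.Proper c ∧ (∀ e, c e ∈ Finset.Icc 1 t) ∧ (∀ i ∈ Finset.Icc 1 t, ∃ e, c e = i) ∧
    ∀ v : V, ∃ a b : ℕ, G.colorSet c v = Finset.Icc a b

def IntervalColorable [Fintype E] (G : Multigraph V E) : Prop :=
  ∃ t c, G.IsIntervalColoring c t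

def Adj (G : Multigraph V E) (v w : V) : Prop := ∃ e, G.ends e = s(v, w)

def Connected (G : Multigraph V E) : Prop :=
  Nonempty V ∧ ∀ v w : V, Relation.ReflTransGen G.Adj v w

noncomputable def maxDegree [Fintype V] [Fintype E] (G : Multigraph V E) : ℕ :=
  Finset.univ.sup G.degree

noncomputable def chromIndex [Fintype E] (G : Multigraph V E) : ℕ :=
  sInf {n | ∃ c : E → ℕ, G.Proper c ∧ ∀ e, c e ∈ Finset.Icc 1 n}

end Multigraph

namespace Multigraph

variable {V E : Type}

/-- The multigraph obtained by subdividing the edge `e` (with endpoints `x` and `y`). -/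
def subdivide (G : Multigraph V E) (e : E) (x y : V) :
    Multigraph (V ⊕ Unit) ({f : E // f ≠ e} ⊕ Bool) where
  ends := fun f => match f with
    | Sum.inl f => (G.ends f.1).map Sum.inl
    | Sum.inr true => s(Sum.inl x, Sum.inr ())
    | Sum.inr false => s(Sum.inl y, Sum.inr ())
  not_isDiag := by
    rintro (⟨f, hf⟩ | b)
    · exact fun h => G.not_isDiag f ((Sym2.isDiag_map Sum.inl_injective).mp h)
    · cases b <;> simp

/-- The multigraph `G*`: a new vertex joined to every vertex of odd degree. -/
def addOddVertex [Fintype E] (G : Multigraph V E) :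
    Multigraph (V ⊕ Unit) (E ⊕ {v : V // Odd (G.degree v)}) where
  ends := fun f => match f with
    | Sum.inl e => (G.ends e).map Sum.inl
    | Sum.inr v => s(Sum.inl v.1, Sum.inr ())
  not_isDiag := by
    rintro (e | v)
    · exact fun h => G.not_isDiag e ((Sym2.isDiag_map Sum.inl_injective).mp h)
    · simp

/-- The edge "names" of the line graph of `G`. -/
def LineEdges (G : Multigraph V E) : Type :=
  {p : Sym2 E // ¬p.IsDiag ∧ ∃ v : V, ∀ f, f ∈ p → v ∈ G.ends f}

noncomputable instance [Finite E] (G : Multigraph V E) : Fintype G.LineEdges := by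
  unfold Multigraph.LineEdges; exact Fintype.ofFinite _

/-- The line graph of `G`, as a multigraph on vertex set `E`. -/
def lineGraph (G : Multigraph V E) : Multigraph E G.LineEdges where
  ends := fun p => p.1
  not_isDiag := fun p => p.2.1

end Multigraph

section Aux

open Finset

lemma myCardFilterOddRange (m : ℕ) :
    ((Finset.range m).filter (fun i => Odd i)).card = m / 2 := by
  induction m with
  | zero => simp
  | succ n ih =>
    rw [Finset.range_add_one, Finset.filter_insert]
    by_cases h : Odd n
    · rw [if_pos h, Finset.card_insert_of_notMem (by simp), ih]
      have := Nat.odd_iff.mp h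
      omega
    · rw [if_neg h, ih]
      have := Nat.not_odd_iff.mp h
      omega

lemma myOddsInIcc (a b : ℕ) (hab : a ≤ b + 1) :
    ((Finset.Icc a b).filter (fun i => Odd i)).card = (b + 1) / 2 - a / 2 := by
  have h1 : Finset.range a ∪ Finset.Icc a b = Finset.range (b + 1) := by
    rw [Finset.range_eq_Ico, Finset.range_eq_Ico, ← Finset.Ico_add_one_right_eq_Icc]
    exact Finset.Ico_union_Ico_eq_Ico (Nat.zero_le a) hab
  have hd : Disjoint (Finset.range a) (Finset.Icc a b) := by
    rw [Finset.range_eq_Ico, ← Finset.Ico_add_one_right_eq_Icc]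
    exact Finset.Ico_disjoint_Ico_consecutive 0 a (b + 1)
  have := myCardFilterOddRange (b + 1)
  rw [← h1, Finset.filter_union,
    Finset.card_union_of_disjoint (Finset.disjoint_filter_filter hd),
    myCardFilterOddRange] at this
  omega

lemma myCardMemSym2 {α : Type*} [Fintype α] (z : Sym2 α) (h : ¬ z.IsDiag) :
    (Finset.univ.filter (fun v => v ∈ z)).card = 2 := by
  induction z using Sym2.ind with
  | _ x y =>
    have hxy : x ≠ y := by simpa using h
    have he : Finset.univ.filter (fun v => v ∈ s(x, y)) = {x, y} := by
      ext v; simp [Sym2.mem_iff]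
    rw [he, Finset.card_insert_of_notMem (by simpa using hxy), Finset.card_singleton]

lemma myHandshake {V E : Type} [Fintype V] [Fintype E] (G : Multigraph V E) :
    ∑ v, G.degree v = 2 * Fintype.card E := by
  unfold Multigraph.degree
  simp_rw [Finset.card_filter]
  rw [Finset.sum_comm]
  have h2 : ∀ e : E, ∑ v : V, (if v ∈ G.ends e then 1 else 0) = 2 := fun e => by
    rw [← Finset.card_filter]
    exact myCardMemSym2 _ (G.not_isDiag e)
  rw [Finset.sum_congr rfl (fun e _ => h2 e), Finset.sum_const, Finset.card_univ,
    smul_eq_mul, mul_comm]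

lemma myEvenOddCard {V E : Type} [Fintype V] [Fintype E] (G : Multigraph V E) :
    Even (Finset.univ.filter (fun v => Odd (G.degree v))).card := by
  have hhs := myHandshake G
  have hsplit := Finset.sum_filter_add_sum_filter_not Finset.univ
    (fun v => Odd (G.degree v)) G.degree
  have heven : Even (∑ v ∈ Finset.univ.filter (fun v => ¬ Odd (G.degree v)), G.degree v) :=
    Finset.even_sum _ (fun v hv => Nat.not_odd_iff_even.mp (Finset.mem_filter.mp hv).2)
  have hodd : ∑ v ∈ Finset.univ.filter (fun v => Odd (G.degree v)), G.degree v
      = (∑ v ∈ Finset.univ.filter (fun v => Odd (G.degree v)), (G.degree v - 1))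
        + (Finset.univ.filter (fun v => Odd (G.degree v))).card := by
    rw [Finset.card_eq_sum_ones, ← Finset.sum_add_distrib]
    refine Finset.sum_congr rfl (fun v hv => ?_)
    have := (Finset.mem_filter.mp hv).2
    rcases this with ⟨k, hk⟩; omega
  have heven2 : Even (∑ v ∈ Finset.univ.filter (fun v => Odd (G.degree v)), (G.degree v - 1)) := by
    refine Finset.even_sum _ (fun v hv => ?_)
    have := (Finset.mem_filter.mp hv).2
    rcases this with ⟨k, hk⟩; exact ⟨k, by omega⟩
  rcases heven with ⟨p, hp⟩; rcases heven2 with ⟨q, hq⟩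
  refine Nat.even_iff.mpr ?_
  omega

lemma myCardColorSet {V E : Type} [Fintype E] (G : Multigraph V E) {c : E → ℕ}
    (hP : G.Proper c) (v : V) : (G.colorSet c v).card = G.degree v := by
  unfold Multigraph.colorSet Multigraph.degree
  refine Finset.card_image_of_injOn (fun e he f hf hcf => ?_)
  by_contra hne
  exact hP e f hne v (Finset.mem_filter.mp he).2 (Finset.mem_filter.mp hf).2 hcf

end Aux

lemma myDegInl {V E : Type} [Fintype V] [Fintype E] (G : Multigraph V E) (v : V) :
    G.addOddVertex.degree (Sum.inl v)
      = G.degree v + (if Odd (G.degree v) then 1 else 0) := by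
  have h1 : ∀ e : E,
      ((Sum.inl v : V ⊕ Unit) ∈ G.addOddVertex.ends (Sum.inl e)) ↔ v ∈ G.ends e := by
    intro e
    show (Sum.inl v : V ⊕ Unit) ∈ (G.ends e).map Sum.inl ↔ _
    simp [Sym2.mem_map]
  have h2 : ∀ w : {v : V // Odd (G.degree v)},
      ((Sum.inl v : V ⊕ Unit) ∈ G.addOddVertex.ends (Sum.inr w)) ↔ w.1 = v := by
    intro w
    show (Sum.inl v : V ⊕ Unit) ∈ s(Sum.inl w.1, Sum.inr ()) ↔ _
    simp [Sym2.mem_iff, eq_comm]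
  have hs : (Finset.univ.filter (fun w : {v : V // Odd (G.degree v)} => w.1 = v)).card
        = (if Odd (G.degree v) then 1 else 0) := by
    by_cases h : Odd (G.degree v)
    · rw [if_pos h]
      have he : (Finset.univ.filter (fun w : {v : V // Odd (G.degree v)} => w.1 = v))
          = {⟨v, h⟩} := by
        ext w; simp [Subtype.ext_iff]
      rw [he, Finset.card_singleton]
    · rw [if_neg h, Finset.card_eq_zero, Finset.filter_eq_empty_iff]
      rintro ⟨w, hw⟩ _ rfl
      exact h hw
  rw [Multigraph.degree.eq_1 (G := G.addOddVertex)]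
  rw [Finset.card_filter, Fintype.sum_sum_type]
  simp only [h1, h2]
  rw [← Finset.card_filter, ← Finset.card_filter]
  congr 1

lemma myDegInr {V E : Type} [Fintype V] [Fintype E] (G : Multigraph V E) :
    G.addOddVertex.degree (Sum.inr ())
      = Fintype.card {v : V // Odd (G.degree v)} := by
  have h1 : ∀ e : E,
      ((Sum.inr () : V ⊕ Unit) ∈ G.addOddVertex.ends (Sum.inl e)) ↔ False := by
    intro e
    show (Sum.inr () : V ⊕ Unit) ∈ (G.ends e).map Sum.inl ↔ _
    simp [Sym2.mem_map]
  have h2 : ∀ w : {v : V // Odd (G.degree v)},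
      ((Sum.inr () : V ⊕ Unit) ∈ G.addOddVertex.ends (Sum.inr w)) ↔ True := by
    intro w
    show (Sum.inr () : V ⊕ Unit) ∈ s(Sum.inl w.1, Sum.inr ()) ↔ _
    simp
  rw [Multigraph.degree.eq_1 (G := G.addOddVertex)]
  rw [Finset.card_filter, Fintype.sum_sum_type]
  simp only [h1, h2]
  simp [Finset.card_univ]

lemma stmt8_aux {V E : Type} [Fintype V] [Fintype E] (G : Multigraph V E)
    (hconn : G.Connected) (hodd : Odd (Fintype.card E))
    (hcol : G.IntervalColorable) :
    ¬ G.addOddVertex.IntervalColorable := by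
  rintro ⟨t, c, hP, hbound, hsurj, hint⟩
  set H := G.addOddVertex with hH
  have hdeg_even : ∀ w : V ⊕ Unit, Even (H.degree w) := by
    rintro (v | ⟨⟩)
    · rw [hH, myDegInl]
      by_cases h : Odd (G.degree v)
      · rw [if_pos h]; rcases h with ⟨k, hk⟩; exact ⟨k + 1, by omega⟩
      · rw [if_neg h]
        simpa using Nat.not_odd_iff_even.mp h
    · rw [hH, myDegInr, Fintype.card_subtype]
      exact myEvenOddCard G
  have hcard : Odd (Fintype.card (E ⊕ {v : V // Odd (G.degree v)})) := by
    rw [Fintype.card_sum, Fintype.card_subtype]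
    rcases hodd with ⟨k, hk⟩
    rcases myEvenOddCard G with ⟨m, hm⟩
    exact ⟨k + m, by omega⟩
  -- counting odd colors at each vertex
  have hstep : ∀ w : V ⊕ Unit, ((H.colorSet c w).filter (fun i => Odd i)).card
      = (Finset.univ.filter (fun e => w ∈ H.ends e ∧ Odd (c e))).card := by
    intro w
    unfold Multigraph.colorSet
    rw [Finset.filter_image, Finset.filter_filter]
    refine (Finset.card_image_of_injOn ?_).trans ?_
    · intro e he f hf hcf
      simp only [Finset.coe_filter, Set.mem_setOf_eq, Finset.mem_univ, true_and] at he hf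
      by_contra hne
      exact hP e f hne w he.1 hf.1 hcf
    · congr 1
      ext x
      simp
  have hclaim1 : ∑ w : V ⊕ Unit, ((H.colorSet c w).filter (fun i => Odd i)).card
      = 2 * (Finset.univ.filter (fun e => Odd (c e))).card := by
    calc ∑ w : V ⊕ Unit, ((H.colorSet c w).filter (fun i => Odd i)).card
        = ∑ w : V ⊕ Unit, ∑ e, (if w ∈ H.ends e ∧ Odd (c e) then 1 else 0) := by
          refine Finset.sum_congr rfl (fun w _ => ?_)
          rw [hstep w, Finset.card_filter]
      _ = ∑ e, ∑ w : V ⊕ Unit, (if w ∈ H.ends e ∧ Odd (c e) then 1 else 0) :=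
          Finset.sum_comm
      _ = ∑ e, (if Odd (c e) then 2 else 0) := by
          refine Finset.sum_congr rfl (fun e _ => ?_)
          by_cases h : Odd (c e)
          · simp only [h, and_true, if_pos]
            rw [← Finset.card_filter]
            convert myCardMemSym2 (H.ends e) (H.not_isDiag e) using 2
            ext x
            simp
          · simp [h]
      _ = 2 * (Finset.univ.filter (fun e => Odd (c e))).card := by
          rw [← Finset.sum_filter, Finset.sum_const, smul_eq_mul, mul_comm]
  have hstep2 : ∀ w : V ⊕ Unit, ((H.colorSet c w).filter (fun i => Odd i)).card
      = H.degree w / 2 := by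
    intro w
    obtain ⟨a, b, hab⟩ := hint w
    have hcardIcc : b + 1 - a = H.degree w := by
      rw [← Nat.card_Icc, ← hab, myCardColorSet H hP]
    rw [hab]
    rcases hdeg_even w with ⟨k, hk⟩
    by_cases hle : a ≤ b + 1
    · rw [myOddsInIcc a b hle]; omega
    · rw [Finset.Icc_eq_empty (by omega)]
      simp only [Finset.filter_empty, Finset.card_empty]
      omega
  have hclaim2 : 2 * ∑ w : V ⊕ Unit, ((H.colorSet c w).filter (fun i => Odd i)).card
      = 2 * Fintype.card (E ⊕ {v : V // Odd (G.degree v)}) := by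
    calc 2 * ∑ w : V ⊕ Unit, ((H.colorSet c w).filter (fun i => Odd i)).card
        = ∑ w : V ⊕ Unit, 2 * (H.degree w / 2) := by
          rw [Finset.mul_sum]
          exact Finset.sum_congr rfl (fun w _ => by rw [hstep2 w])
      _ = ∑ w : V ⊕ Unit, H.degree w := by
          refine Finset.sum_congr rfl (fun w _ => ?_)
          rcases hdeg_even w with ⟨k, hk⟩; omega
      _ = 2 * Fintype.card (E ⊕ {v : V // Odd (G.degree v)}) := myHandshake H
  rcases hcard with ⟨m, hm⟩
  rw [hclaim1] at hclaim2
  omega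

/-- if `G` is connected with an odd number of edges and is interval colorable,
then `G*` (a new vertex joined to every odd-degree vertex) has no interval coloring. -/
theorem stmt8 {V E : Type} [Fintype V] [Fintype E] (G : Multigraph V E)
    (hconn : G.Connected) (hodd : Odd (Fintype.card E))
    (hcol : G.IntervalColorable) :
    ¬ G.addOddVertex.IntervalColorable := by
  exact stmt8_aux G hconn hodd hcol
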